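/- For 0 < δ < 1, ν = (1-√δ)/(1+√δ), and θ ∈ (-1/2, 1/2), V'_δ(θ) = h_ν(θ) - 2θ + h_{1/ν}(θ), where V'_δ(θ) = -(2/π) arctan( δ sin(2πθ) / (1 + δ cos(2πθ)) ). -/

import Mathlib

open Real

noncomputable def h (ν θ : ℝ) : ℝ :=
  (2 / π) * arctan (((ν + 1) * tan (π * θ / 2) + (ν - 1)) /
    ((ν - 1) * tan (π * θ / 2) + (ν + 1)))

noncomputable def Vd' (δ θ : ℝ) : ℝ :=
  -(2 / π) * arctan (δ * sin (2 * π * θ) / (1 + δ * cos (2 * π * θ)))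

set_option maxHeartbeats 1600000 in
theorem Vd_eq_h (δ : ℝ) (hδ : 0 < δ) (hδ1 : δ < 1)
    (θ : ℝ) (hθ : θ ∈ Set.Ioo (-(1:ℝ)/2) (1/2)) :
    Vd' δ θ = h ((1 - Real.sqrt δ) / (1 + Real.sqrt δ)) θ - 2 * θ
      + h (1 / ((1 - Real.sqrt δ) / (1 + Real.sqrt δ))) θ := by
  obtain ⟨hθ1, hθ2⟩ := hθ
  have hπ : (0:ℝ) < π := Real.pi_pos
  set s : ℝ := Real.sqrt δ with hs
  have hs0 : 0 < s := Real.sqrt_pos.mpr hδ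
  have hssq : s ^ 2 = δ := Real.sq_sqrt hδ.le
  have hs1 : s < 1 := by nlinarith
  set t : ℝ := tan (π * θ / 2) with ht
  have hx1 : -(π / 2) < π * θ / 2 := by nlinarith
  have hx2 : π * θ / 2 < π / 2 := by nlinarith
  have ht1 : t < 1 := by
    rw [ht, ← Real.tan_pi_div_four]
    exact tan_lt_tan_of_lt_of_lt_pi_div_two hx1 (by linarith) (by nlinarith)
  have htm1 : -1 < t := by
    have h4 : tan (-(π/4)) = -1 := by rw [Real.tan_neg, Real.tan_pi_div_four]
    rw [ht, ← h4]
    exact tan_lt_tan_of_lt_of_lt_pi_div_two (by linarith) hx2 (by nlinarith)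
  have h1t : (0:ℝ) < 1 - t ^ 2 := by nlinarith
  have hst1 : (0:ℝ) < 1 - s * t := by nlinarith [sq_nonneg (s - t)]
  have hst2 : (0:ℝ) < 1 + s * t := by nlinarith [sq_nonneg (s + t)]
  have hs1p : (0:ℝ) < 1 + s := by linarith
  have hs1m : (0:ℝ) < 1 - s := by linarith
  have hA : h ((1 - s) / (1 + s)) θ = (2 / π) * arctan ((t - s) / (1 - s * t)) := by
    unfold h
    rw [← ht]
    have e1 : ((1 - s) / (1 + s) + 1) * t + ((1 - s) / (1 + s) - 1)
        = (2 / (1 + s)) * (t - s) := by field_simp; ring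
    have e2 : ((1 - s) / (1 + s) - 1) * t + ((1 - s) / (1 + s) + 1)
        = (2 / (1 + s)) * (1 - s * t) := by field_simp; ring
    rw [e1, e2, mul_div_mul_left _ _ (by positivity : (2:ℝ)/(1+s) ≠ 0)]
  have hB : h (1 / ((1 - s) / (1 + s))) θ
      = (2 / π) * arctan ((t + s) / (1 + s * t)) := by
    unfold h
    rw [← ht, one_div_div]
    have e1 : ((1 + s) / (1 - s) + 1) * t + ((1 + s) / (1 - s) - 1)
        = (2 / (1 - s)) * (t + s) := by field_simp; ring
    have e2 : ((1 + s) / (1 - s) - 1) * t + ((1 + s) / (1 - s) + 1)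
        = (2 / (1 - s)) * (1 + s * t) := by field_simp; ring
    rw [e1, e2, mul_div_mul_left _ _ (by positivity : (2:ℝ)/(1-s) ≠ 0)]
  set a : ℝ := (t - s) / (1 - s * t) with ha
  set b : ℝ := (t + s) / (1 + s * t) with hb
  have hab1 : 1 - a * b
      = ((1 + s ^ 2) * (1 - t ^ 2)) / ((1 - s * t) * (1 + s * t)) := by
    rw [ha, hb, div_mul_div_comm, one_sub_div (mul_pos hst1 hst2).ne']; congr 1; ring
  have habl : a * b < 1 := by
    have hpos : (0:ℝ) < ((1 + s ^ 2) * (1 - t ^ 2)) / ((1 - s * t) * (1 + s * t)) := by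
      exact div_pos (mul_pos (by positivity) h1t) (mul_pos hst1 hst2)
    linarith
  set ψ : ℝ := π * θ with hψ
  have hψ1 : -(π / 2) < ψ := by rw [hψ]; nlinarith
  have hψ2 : ψ < π / 2 := by rw [hψ]; nlinarith
  have hc : 0 < cos ψ := Real.cos_pos_of_mem_Ioo ⟨hψ1, hψ2⟩
  have hT : tan ψ = 2 * t / (1 - t ^ 2) := by
    rw [hψ, ht, show π * θ = 2 * (π * θ / 2) by ring, Real.tan_two_mul]
  have hsum : arctan a + arctan b = arctan ((1 - δ) / (1 + δ) * tan ψ) := by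
    rw [Real.arctan_add habl]
    congr 1
    rw [hab1, hT, ha, hb, ← hssq]
    have h1s : (0:ℝ) < 1 + s ^ 2 := by positivity
    field_simp [hst1.ne', hst2.ne', h1t.ne', h1s.ne', (ne_of_gt (by linarith [mul_comm s t]) : (1:ℝ) - t * s ≠ 0), (ne_of_gt (by linarith [mul_comm s t]) : (1:ℝ) + t * s ≠ 0)]
    ring
  set g : ℝ := δ * sin (2 * π * θ) / (1 + δ * cos (2 * π * θ)) with hg
  have h2ψ : 2 * π * θ = 2 * ψ := by rw [hψ]; ring
  have hgeq : g = 2 * δ * sin ψ * cos ψ / ((1 - δ) + 2 * δ * cos ψ ^ 2) := by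
    rw [hg, h2ψ, Real.sin_two_mul, Real.cos_two_mul]
    congr 1
    · ring
    · ring
  have h1δ : (0:ℝ) < 1 + δ := by linarith
  have hden2 : 0 < (1 - δ) + 2 * δ * cos ψ ^ 2 := by
    have := mul_pos hδ (pow_pos hc 2); linarith
  set X : ℝ := (1 - δ) / (1 + δ) * tan ψ with hX
  have htaneq : tan ψ = sin ψ / cos ψ := Real.tan_eq_sin_div_cos ψ
  have hXg0 : X * g = 2 * δ * (1 - δ) * (1 - cos ψ ^ 2)
      / ((1 + δ) * ((1 - δ) + 2 * δ * cos ψ ^ 2)) := by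
    rw [hX, hgeq, htaneq,
      show (1 - cos ψ ^ 2) = sin ψ ^ 2 from (Real.sin_sq ψ).symm]
    field_simp
  have hXg1 : 1 - X * g = ((1 - δ) ^ 2 + 4 * δ * cos ψ ^ 2)
      / ((1 + δ) * ((1 - δ) + 2 * δ * cos ψ ^ 2)) := by
    rw [hXg0]; field_simp; ring
  have hp1 : (0:ℝ) < (1 - δ) ^ 2 + 4 * δ * cos ψ ^ 2 := by
    nlinarith [mul_pos hδ (pow_pos hc 2), sq_nonneg (1 - δ)]
  have hXgl : X * g < 1 := by
    have hpos : (0:ℝ) < ((1 - δ) ^ 2 + 4 * δ * cos ψ ^ 2)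
        / ((1 + δ) * ((1 - δ) + 2 * δ * cos ψ ^ 2)) :=
      div_pos hp1 (mul_pos h1δ hden2)
    linarith
  have hsum2 : arctan X + arctan g = ψ := by
    rw [Real.arctan_add hXgl]
    have hq : (X + g) / (1 - X * g) = tan ψ := by
      rw [hXg1, hX, hgeq, htaneq]
      field_simp [hden2.ne', hc.ne', h1δ.ne', hp1.ne', (ne_of_gt (by linarith) : (1:ℝ) - δ + δ * cos ψ ^ 2 * 2 ≠ 0), (ne_of_gt (by linarith) : (1 - δ) ^ 2 + δ * cos ψ ^ 2 * 4 ≠ 0)]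
      ring
    rw [hq, Real.arctan_tan hψ1 hψ2]
  have hax : arctan X = ψ - arctan g := by linarith
  rw [hA, hB,
    show (2 / π) * arctan a - 2 * θ + (2 / π) * arctan b
      = (2 / π) * (arctan a + arctan b) - 2 * θ by ring,
    hsum, hax]
  unfold Vd'
  rw [← hg]
  have h2θ : (2 / π) * ψ = 2 * θ := by
    rw [hψ]; field_simp
  rw [mul_sub, h2θ]
  ring
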